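/- Every minimal separator of a minimal triangulation I of a graph G is also a minimal separator of G, i.e., Δ_I ⊆ Δ_G. -/

import Mathlib

open scoped Classical

/-- Data of a (finite) tree decomposition: an index type, a graph on it, and bags. -/
structure TDData (V : Type) where
  ι : Type
  fin : Fintype ι
  tree : SimpleGraph ι
  bag : ι → Finset V

/-- `D` is a tree decomposition of the graph `G`. -/
def IsGraphTD {V : Type} (G : SimpleGraph V) (D : TDData V) : Prop :=
  D.tree.IsTree ∧
  (∀ v : V, ∃ t, v ∈ D.bag t) ∧
  (∀ u v : V, G.Adj u v → ∃ t, u ∈ D.bag t ∧ v ∈ D.bag t) ∧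
  (∀ v : V, (D.tree.induce {t | v ∈ D.bag t}).Connected)

/-- `D` is a tree decomposition of the hypergraph with edge family `E`. -/
def IsHyperTD {V : Type} (E : Finset (Finset V)) (D : TDData V) : Prop :=
  D.tree.IsTree ∧
  (∀ v : V, ∃ t, v ∈ D.bag t) ∧
  (∀ e ∈ E, ∃ t, e ⊆ D.bag t) ∧
  (∀ v : V, (D.tree.induce {t | v ∈ D.bag t}).Connected)

/-- A monotone width function. -/
def MonoWidth {V : Type} (f : Finset V → NNReal) : Prop :=
  ∀ X Y : Finset V, X ⊆ Y → f X ≤ f Y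

/-- The `f`-width of a tree decomposition: the supremum of `f` over its bags. -/
noncomputable def tdWidth {V : Type} (f : Finset V → NNReal) (D : TDData V) : NNReal :=
  ⨆ t : D.ι, f (D.bag t)

/-- The `f`-tree-width of a graph. -/
noncomputable def ftw {V : Type} (G : SimpleGraph V) (f : Finset V → NNReal) : NNReal :=
  ⨅ D : {D : TDData V // IsGraphTD G D}, tdWidth f D.1

/-- The `f`-hypertree-width of a hypergraph. -/
noncomputable def fhtw {V : Type} (E : Finset (Finset V)) (f : Finset V → NNReal) : NNReal :=
  ⨅ D : {D : TDData V // IsHyperTD E D}, tdWidth f D.1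

/-- The `f`-clique-number of a graph. -/
noncomputable def fCliqueNum {V : Type} (G : SimpleGraph V) (f : Finset V → NNReal) : NNReal :=
  ⨆ Ω : {Ω : Finset V // G.IsClique (Ω : Set V)}, f Ω.1

/-- The Gaifman (primal) graph of a hypergraph. -/
def gaifman {V : Type} (E : Finset (Finset V)) : SimpleGraph V :=
  SimpleGraph.fromRel fun u v => ∃ e ∈ E, u ∈ e ∧ v ∈ e

/-- A graph is chordal if every cycle of length at least 4 has a chord. -/
def IsChordal {V : Type} (G : SimpleGraph V) : Prop :=
  ∀ (v : V) (p : G.Walk v v), p.IsCycle → 4 ≤ p.length →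
    ∃ u w : V, u ∈ p.support ∧ w ∈ p.support ∧ G.Adj u w ∧ s(u, w) ∉ p.edges

/-- `I` is a triangulation of `G`: a chordal supergraph on the same vertex set. -/
def IsTriangulation {V : Type} (G I : SimpleGraph V) : Prop :=
  G ≤ I ∧ IsChordal I

/-- `I` is a minimal triangulation of `G`. -/
def IsMinTriang {V : Type} (G I : SimpleGraph V) : Prop :=
  IsTriangulation G I ∧ ∀ I' : SimpleGraph V, IsTriangulation G I' → I' ≤ I → I' = I

/-- A maximal clique of `G` (as a finset). -/
def IsMaxClique {V : Type} (G : SimpleGraph V) (Ω : Finset V) : Prop :=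
  G.IsClique (Ω : Set V) ∧ ∀ Ω' : Finset V, G.IsClique (Ω' : Set V) → Ω ⊆ Ω' → Ω = Ω'

/-- A potential maximal clique: a maximal clique of some minimal triangulation. -/
def IsPMC {V : Type} (G : SimpleGraph V) (Ω : Finset V) : Prop :=
  ∃ I : SimpleGraph V, IsMinTriang G I ∧ IsMaxClique I Ω

/-- `u` and `v` are joined by a walk avoiding `S`. -/
def ReachAvoid {V : Type} (G : SimpleGraph V) (S : Finset V) (u v : V) : Prop :=
  ∃ p : G.Walk u v, ∀ x ∈ p.support, x ∉ S

/-- `S` is a `u,v`-separator of `G`. -/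
def IsUVSep {V : Type} (G : SimpleGraph V) (u v : V) (S : Finset V) : Prop :=
  u ∉ S ∧ v ∉ S ∧ ¬ ReachAvoid G S u v

/-- `S` is a minimal separator of `G`: a minimal `u,v`-separator for some
non-adjacent pair of distinct vertices `u,v`. -/
def IsMinSep {V : Type} (G : SimpleGraph V) (S : Finset V) : Prop :=
  ∃ u v : V, u ≠ v ∧ ¬ G.Adj u v ∧ IsUVSep G u v S ∧ ∀ S' ⊂ S, ¬ IsUVSep G u v S'

/-- An inclusion-minimal separator: a minimal separator not properly containing
another minimal separator. -/
def IsInclMinSep {V : Type} (G : SimpleGraph V) (S : Finset V) : Prop :=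
  IsMinSep G S ∧ ∀ S' : Finset V, IsMinSep G S' → S' ⊆ S → S' = S

/-- `C` is (the vertex set of) a connected component of `G - S`. -/
def IsCompAvoid {V : Type} (G : SimpleGraph V) (S C : Finset V) : Prop :=
  C.Nonempty ∧ (∀ x ∈ C, x ∉ S) ∧
  (∀ x ∈ C, ∀ y ∈ C, ReachAvoid G S x y) ∧
  (∀ x ∈ C, ∀ y : V, y ∉ S → ReachAvoid G S x y → y ∈ C)

/-- The neighborhood of a set `C` of vertices, as a set. -/
def nbhdSet {V : Type} (G : SimpleGraph V) (C : Finset V) : Set V :=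
  {v | v ∉ C ∧ ∃ u ∈ C, G.Adj u v}

/-- The neighborhood of a set `C` of vertices, as a finset. -/
noncomputable def nbhd {V : Type} [Fintype V] [DecidableEq V]
    (G : SimpleGraph V) (C : Finset V) : Finset V :=
  Finset.univ.filter fun v => v ∉ C ∧ ∃ u ∈ C, G.Adj u v

/-- The realization `R(S,C)` of a block: the graph on `S ∪ C` induced from `G`
with `S` turned into a clique (viewed as a graph on `V` with no edges outside `S ∪ C`). -/
def real {V : Type} [DecidableEq V] (G : SimpleGraph V) (S C : Finset V) : SimpleGraph V :=
  SimpleGraph.fromRel fun u v =>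
    (u ∈ S ∪ C ∧ v ∈ S ∪ C) ∧ (G.Adj u v ∨ (u ∈ S ∧ v ∈ S))

/-- The subgraph of `I` induced by a finset `W`, viewed as a graph on `V`. -/
def restrict {V : Type} (I : SimpleGraph V) (W : Finset V) : SimpleGraph V :=
  SimpleGraph.fromRel fun u v => u ∈ W ∧ v ∈ W ∧ I.Adj u v

/-- `(S,C)` is a full block of `G`. -/
def FullBlock {V : Type} (G : SimpleGraph V) (S C : Finset V) : Prop :=
  IsMinSep G S ∧ IsCompAvoid G S C ∧ nbhdSet G C = (S : Set V)


section AuxLemmas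
variable {V : Type}

open SimpleGraph

lemma ra_nil {G : SimpleGraph V} {S : Finset V} {u : V} (hu : u ∉ S) :
    ReachAvoid G S u u := ⟨Walk.nil, by simpa using hu⟩

lemma ra_symm {G : SimpleGraph V} {S : Finset V} {u v : V}
    (h : ReachAvoid G S u v) : ReachAvoid G S v u := by
  obtain ⟨p, hp⟩ := h
  exact ⟨p.reverse, fun x hx => hp x (by simpa [Walk.support_reverse] using hx)⟩

lemma ra_trans {G : SimpleGraph V} {S : Finset V} {u v w : V}
    (h₁ : ReachAvoid G S u v) (h₂ : ReachAvoid G S v w) : ReachAvoid G S u w := by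
  obtain ⟨p, hp⟩ := h₁; obtain ⟨q, hq⟩ := h₂
  refine ⟨p.append q, fun x hx => ?_⟩
  rcases (Walk.mem_support_append_iff p q).mp hx with h | h
  · exact hp x h
  · exact hq x h

lemma ra_step {G : SimpleGraph V} {S : Finset V} {u a b : V}
    (h : ReachAvoid G S u a) (hab : G.Adj a b) (hb : b ∉ S) : ReachAvoid G S u b := by
  obtain ⟨p, hp⟩ := h
  refine ⟨p.append (Walk.cons hab Walk.nil), fun x hx => ?_⟩
  rcases (Walk.mem_support_append_iff _ _).mp hx with h' | h'
  · exact hp x h'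
  · simp only [Walk.support_cons, Walk.support_nil, List.mem_cons, List.mem_singleton] at h'
    rcases h' with rfl | rfl | h'
    · exact hp x (Walk.end_mem_support _)
    · exact hb
    · simp at h'

lemma ra_ofLe {G I : SimpleGraph V} (h : G ≤ I) {S : Finset V} {u v : V}
    (hr : ReachAvoid G S u v) : ReachAvoid I S u v := by
  obtain ⟨p, hp⟩ := hr
  refine ⟨p.mapLe h, fun x hx => hp x ?_⟩
  simpa [Walk.support_map, Hom.coe_ofLE] using hx

lemma walk_length_one_adj {G : SimpleGraph V} {a b : V} {p : G.Walk a b}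
    (h : p.length = 1) : G.Adj a b := by
  cases p with
  | nil => simp at h
  | cons h' q =>
    have hq : q.length = 0 := by simpa using h
    have := Walk.eq_of_length_eq_zero hq
    subst this
    exact h'

lemma walk_length_one_edges {G : SimpleGraph V} {a b : V} {p : G.Walk a b}
    (h : p.length = 1) : s(a, b) ∈ p.edges := by
  cases p with
  | nil => simp at h
  | cons h' q =>
    have hq : q.length = 0 := by simpa using h
    have := Walk.eq_of_length_eq_zero hq
    subst this
    simp

end AuxLemmas

section Shortcut
variable {V : Type}
open SimpleGraph

lemma exists_min_path {I : SimpleGraph V} {x y : V} (P : V → Prop)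
    (h : ∃ w : I.Walk x y, ∀ z ∈ w.support, P z) :
    ∃ p : I.Walk x y, p.IsPath ∧ (∀ z ∈ p.support, P z) ∧
      ∀ q : I.Walk x y, (∀ z ∈ q.support, P z) → p.length ≤ q.length := by
  have hex : ∃ n, ∃ w : I.Walk x y, (∀ z ∈ w.support, P z) ∧ w.length = n := by
    obtain ⟨w, hw⟩ := h; exact ⟨w.length, w, hw, rfl⟩
  obtain ⟨w, hw, hwn⟩ := Nat.find_spec hex
  refine ⟨w.bypass, w.bypass_isPath, fun z hz => hw z (w.support_bypass_subset hz), ?_⟩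
  intro q hq
  have h1 : w.bypass.length ≤ Nat.find hex := hwn ▸ w.length_bypass_le
  have h2 : Nat.find hex ≤ q.length := Nat.find_min' hex ⟨q, hq, rfl⟩
  omega

lemma shortcut {I : SimpleGraph V} {x y a b : V} (p : I.Walk x y)
    (ha : a ∈ p.support) (hb : b ∈ p.support) (hadj : I.Adj a b)
    (he : s(a, b) ∉ p.edges) :
    ∃ q : I.Walk x y, (∀ z ∈ q.support, z ∈ p.support) ∧ q.length < p.length := by
  have seg2 : ∀ (c d : V) (w : I.Walk c d), (c = a ∧ d = b ∨ c = b ∧ d = a) →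
      (∀ e ∈ w.edges, e ∈ p.edges) → 2 ≤ w.length := by
    intro c d w hcd hsub
    by_contra hlt
    push_neg at hlt
    have h01 : w.length = 0 ∨ w.length = 1 := by omega
    rcases h01 with h0 | h1
    · have := Walk.eq_of_length_eq_zero h0
      rcases hcd with ⟨rfl, rfl⟩ | ⟨rfl, rfl⟩
      · exact hadj.ne this
      · exact hadj.ne this.symm
    · have hme := hsub _ (walk_length_one_edges h1)
      rcases hcd with ⟨rfl, rfl⟩ | ⟨rfl, rfl⟩
      · exact he hme
      · exact he (Sym2.eq_swap ▸ hme)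
  have hps := p.take_spec ha
  have hlen : (p.takeUntil a ha).length + (p.dropUntil a ha).length = p.length := by
    conv_rhs => rw [← hps]
    rw [Walk.length_append]
  have hb' : b ∈ (p.takeUntil a ha).support ∨ b ∈ (p.dropUntil a ha).support := by
    rw [← hps, Walk.mem_support_append_iff] at hb
    exact hb
  rcases hb' with hb1 | hb2
  · -- b occurs before a
    set q1 := p.takeUntil a ha with hq1
    have hts := q1.take_spec hb1
    have hlen2 : (q1.takeUntil b hb1).length + (q1.dropUntil b hb1).length = q1.length := by
      conv_rhs => rw [← hts]
      rw [Walk.length_append]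
    have hr2 : 2 ≤ (q1.dropUntil b hb1).length :=
      seg2 b a _ (Or.inr ⟨rfl, rfl⟩)
        (fun e he' => p.edges_takeUntil_subset ha (q1.edges_dropUntil_subset hb1 he'))
    refine ⟨(q1.takeUntil b hb1).append (Walk.cons hadj.symm (p.dropUntil a ha)), ?_, ?_⟩
    · intro z hz
      rcases (Walk.mem_support_append_iff _ _).mp hz with h | h
      · exact p.support_takeUntil_subset ha (q1.support_takeUntil_subset hb1 h)
      · rw [Walk.support_cons] at h
        rcases List.mem_cons.mp h with rfl | h
        · exact hb
        · exact p.support_dropUntil_subset ha h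
    · rw [Walk.length_append, Walk.length_cons]
      omega
  · -- b occurs after a
    set q2 := p.dropUntil a ha with hq2
    have hts := q2.take_spec hb2
    have hlen2 : (q2.takeUntil b hb2).length + (q2.dropUntil b hb2).length = q2.length := by
      conv_rhs => rw [← hts]
      rw [Walk.length_append]
    have ht2 : 2 ≤ (q2.takeUntil b hb2).length :=
      seg2 a b _ (Or.inl ⟨rfl, rfl⟩)
        (fun e he' => p.edges_dropUntil_subset ha (q2.edges_takeUntil_subset hb2 he'))
    refine ⟨(p.takeUntil a ha).append (Walk.cons hadj (q2.dropUntil b hb2)), ?_, ?_⟩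
    · intro z hz
      rcases (Walk.mem_support_append_iff _ _).mp hz with h | h
      · exact p.support_takeUntil_subset ha h
      · rw [Walk.support_cons] at h
        rcases List.mem_cons.mp h with rfl | h
        · exact ha
        · exact p.support_dropUntil_subset ha (q2.support_dropUntil_subset hb2 h)
    · rw [Walk.length_append, Walk.length_cons]
      omega

end Shortcut



section MinSepClique
variable {V : Type}
open SimpleGraph

lemma key0 {I : SimpleGraph V} {S : Finset V} (t t' z : V) (hz : z ∈ S)
    (hre : ReachAvoid I (S.erase z) t t') (hnre : ¬ ReachAvoid I S t t') :
    ∃ q : I.Walk t z, ∀ w ∈ q.support, (w ∉ S ∧ ReachAvoid I S t w) ∨ w = z := by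
  obtain ⟨p, hp⟩ := hre
  have hzp : z ∈ p.support := by
    by_contra hzp
    refine hnre ⟨p, fun w hw hwS => ?_⟩
    rcases eq_or_ne w z with rfl | hwz
    · exact hzp hw
    · exact hp w hw (Finset.mem_erase.mpr ⟨hwz, hwS⟩)
  refine ⟨p.takeUntil z hzp, ?_⟩
  intro w hw
  rcases eq_or_ne w z with rfl | hwz
  · exact Or.inr rfl
  refine Or.inl ⟨?_, ?_⟩
  · intro hwS
    exact hp w (p.support_takeUntil_subset hzp hw) (Finset.mem_erase.mpr ⟨hwz, hwS⟩)
  · set q := p.takeUntil z hzp with hq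
    refine ⟨q.takeUntil w hw, fun s hs hsS => ?_⟩
    have hsz : s = z := by
      by_contra h
      exact hp s (p.support_takeUntil_subset hzp (q.support_takeUntil_subset hw hs))
        (Finset.mem_erase.mpr ⟨h, hsS⟩)
    subst hsz
    have hcount : q.support.count s = 1 := p.count_support_takeUntil_eq_one hzp
    have hsup := Walk.support_append (q.takeUntil w hw) (q.dropUntil w hw)
    rw [q.take_spec hw] at hsup
    have h2 : s ∈ (q.dropUntil w hw).support.tail := by
      have hz2 : s ∈ (q.dropUntil w hw).support := Walk.end_mem_support _
      rw [Walk.support_eq_cons (q.dropUntil w hw)] at hz2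
      rcases List.mem_cons.mp hz2 with h | h
      · exact absurd h.symm hwz
      · exact h
    rw [hsup, List.count_append] at hcount
    have c1 : 0 < List.count s (q.takeUntil w hw).support := List.count_pos_iff.mpr hs
    have c2 : 0 < List.count s (q.dropUntil w hw).support.tail := List.count_pos_iff.mpr h2
    omega

lemma minsep_clique {I : SimpleGraph V} (hc : IsChordal I) {S : Finset V}
    (hS : IsMinSep I S) : ∀ x ∈ S, ∀ y ∈ S, x ≠ y → I.Adj x y := by
  obtain ⟨u, v, huv, hnadj, ⟨huS, hvS, hsep⟩, hmin⟩ := hS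
  intro x hx y hy hxy
  by_contra hadj
  set D : Set V := {w | w ∉ S ∧ ReachAvoid I S u w} with hD
  set E : Set V := {w | w ∉ S ∧ ReachAvoid I S v w} with hE
  have hDE : ∀ w, w ∈ D → w ∈ E → False := by
    intro w hw1 hw2
    exact hsep (ra_trans hw1.2 (ra_symm hw2.2))
  have hre : ∀ z ∈ S, ReachAvoid I (S.erase z) u v := by
    intro z hz
    by_contra h
    exact hmin (S.erase z) (Finset.erase_ssubset hz)
      ⟨fun h' => huS (Finset.mem_of_mem_erase h'),
       fun h' => hvS (Finset.mem_of_mem_erase h'), h⟩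
  have keyu : ∀ z ∈ S, ∃ q : I.Walk u z, ∀ w ∈ q.support, w ∈ D ∨ w = z := by
    intro z hz
    exact key0 u v z hz (hre z hz) hsep
  have keyv : ∀ z ∈ S, ∃ q : I.Walk v z, ∀ w ∈ q.support, w ∈ E ∨ w = z := by
    intro z hz
    exact key0 v u z hz (ra_symm (hre z hz)) (fun h => hsep (ra_symm h))
  obtain ⟨qx, hqx⟩ := keyu x hx
  obtain ⟨qy, hqy⟩ := keyu y hy
  obtain ⟨rx, hrx⟩ := keyv x hx
  obtain ⟨ry, hry⟩ := keyv y hy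
  have hclass1 : ∃ w : I.Walk x y, ∀ z ∈ w.support, z ∈ D ∨ z = x ∨ z = y := by
    refine ⟨qx.reverse.append qy, fun z hz => ?_⟩
    rcases (Walk.mem_support_append_iff _ _).mp hz with h | h
    · rw [Walk.support_reverse, List.mem_reverse] at h
      rcases hqx z h with h | rfl
      · exact Or.inl h
      · exact Or.inr (Or.inl rfl)
    · rcases hqy z h with h | rfl
      · exact Or.inl h
      · exact Or.inr (Or.inr rfl)
  have hclass2 : ∃ w : I.Walk y x, ∀ z ∈ w.support, z ∈ E ∨ z = y ∨ z = x := by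
    refine ⟨ry.reverse.append rx, fun z hz => ?_⟩
    rcases (Walk.mem_support_append_iff _ _).mp hz with h | h
    · rw [Walk.support_reverse, List.mem_reverse] at h
      rcases hry z h with h | rfl
      · exact Or.inl h
      · exact Or.inr (Or.inl rfl)
    · rcases hrx z h with h | rfl
      · exact Or.inl h
      · exact Or.inr (Or.inr rfl)
  obtain ⟨p1, hp1path, hp1supp, hp1min⟩ := exists_min_path _ hclass1
  obtain ⟨p2, hp2path, hp2supp, hp2min⟩ := exists_min_path _ hclass2
  have hcap : ∀ z, z ∈ p1.support → z ∈ p2.support → z = x ∨ z = y := by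
    intro z h1 h2
    rcases hp1supp z h1 with hzD | h | h
    · rcases hp2supp z h2 with hzE | rfl | rfl
      · exact (hDE z hzD hzE).elim
      · exact absurd hy hzD.1
      · exact absurd hx hzD.1
    · exact Or.inl h
    · exact Or.inr h
  have hl1 : 2 ≤ p1.length := by
    by_contra h
    push_neg at h
    have h01 : p1.length = 0 ∨ p1.length = 1 := by omega
    rcases h01 with h0 | h1
    · exact hxy (Walk.eq_of_length_eq_zero h0)
    · exact hadj (walk_length_one_adj h1)
  have hl2 : 2 ≤ p2.length := by
    by_contra h
    push_neg at h
    have h01 : p2.length = 0 ∨ p2.length = 1 := by omega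
    rcases h01 with h0 | h1
    · exact hxy (Walk.eq_of_length_eq_zero h0).symm
    · exact hadj (walk_length_one_adj h1).symm
  have hx1 : x ∉ p1.support.tail := by
    have h := hp1path.support_nodup
    rw [Walk.support_eq_cons] at h
    exact (List.nodup_cons.mp h).1
  have hy2 : y ∉ p2.support.tail := by
    have h := hp2path.support_nodup
    rw [Walk.support_eq_cons] at h
    exact (List.nodup_cons.mp h).1
  have hdisj : ∀ z ∈ p1.support.tail, z ∉ p2.support.tail := by
    intro z h1 h2
    have h1' : z ∈ p1.support := by
      rw [Walk.support_eq_cons p1]; exact List.mem_cons_of_mem _ h1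
    have h2' : z ∈ p2.support := by
      rw [Walk.support_eq_cons p2]; exact List.mem_cons_of_mem _ h2
    rcases hcap z h1' h2' with rfl | rfl
    · exact hx1 h1
    · exact hy2 h2
  set c := p1.append p2 with hcdef
  have hcsup : c.support = p1.support ++ p2.support.tail := Walk.support_append _ _
  have hctail : c.support.tail = p1.support.tail ++ p2.support.tail := by
    rw [hcsup]
    conv_lhs => rw [Walk.support_eq_cons p1]
    rfl
  have hced : c.edges = p1.edges ++ p2.edges := Walk.edges_append _ _
  have hclen : c.length = p1.length + p2.length := Walk.length_append _ _
  have hcyc : c.IsCycle := by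
    refine ⟨⟨⟨?_⟩, ?_⟩, ?_⟩
    · rw [hced]
      refine List.Nodup.append hp1path.isTrail.edges_nodup hp2path.isTrail.edges_nodup ?_
      intro e he1 he2
      induction e using Sym2.ind with
      | _ a0 b0 =>
        have hadj0 := p1.adj_of_mem_edges he1
        have ha1 := p1.fst_mem_support_of_mem_edges he1
        have hb1 := p1.snd_mem_support_of_mem_edges he1
        have ha2 := p2.fst_mem_support_of_mem_edges he2
        have hb2 := p2.snd_mem_support_of_mem_edges he2
        rcases hcap a0 ha1 ha2 with rfl | rfl <;> rcases hcap b0 hb1 hb2 with rfl | rfl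
        · exact hadj0.ne rfl
        · exact hadj hadj0
        · exact hadj hadj0.symm
        · exact hadj0.ne rfl
    · intro h
      have h0 : c.length = 0 := by rw [h]; rfl
      omega
    · rw [hctail]
      exact List.Nodup.append hp1path.support_nodup.tail hp2path.support_nodup.tail hdisj
  obtain ⟨a, b, hac, hbc, hab, habe⟩ := hc x c hcyc (by omega)
  have hmem : ∀ z, z ∈ c.support → z ∈ p1.support ∨ z ∈ p2.support := by
    intro z hz
    rw [hcsup] at hz
    rcases List.mem_append.mp hz with h | h
    · exact Or.inl h
    · exact Or.inr (by rw [Walk.support_eq_cons p2]; exact List.mem_cons_of_mem _ h)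
  have inp1 : ∀ a b : V, a ∈ p1.support → b ∈ p1.support → I.Adj a b →
      s(a, b) ∉ c.edges → False := by
    intro a b h1 h2 hab habe
    have he1 : s(a, b) ∉ p1.edges := fun h => habe (by rw [hced]; exact List.mem_append_left _ h)
    obtain ⟨q, hq, hql⟩ := shortcut p1 h1 h2 hab he1
    have := hp1min q (fun z hz => hp1supp z (hq z hz))
    omega
  have inp2 : ∀ a b : V, a ∈ p2.support → b ∈ p2.support → I.Adj a b →
      s(a, b) ∉ c.edges → False := by
    intro a b h1 h2 hab habe
    have he1 : s(a, b) ∉ p2.edges := fun h => habe (by rw [hced]; exact List.mem_append_right _ h)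
    obtain ⟨q, hq, hql⟩ := shortcut p2 h1 h2 hab he1
    have := hp2min q (fun z hz => hp2supp z (hq z hz))
    omega
  have mixed : ∀ a b : V, a ∈ p1.support → a ∉ p2.support → b ∈ p2.support →
      b ∉ p1.support → I.Adj a b → False := by
    intro a b h1 h1' h2 h2' hab
    have haD : a ∈ D := by
      rcases hp1supp a h1 with h | rfl | rfl
      · exact h
      · exact absurd (Walk.end_mem_support p2) h1'
      · exact absurd (Walk.start_mem_support p2) h1'
    have hbE : b ∈ E := by
      rcases hp2supp b h2 with h | rfl | rfl
      · exact h
      · exact absurd (Walk.end_mem_support p1) h2'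
      · exact absurd (Walk.start_mem_support p1) h2'
    exact hsep (ra_trans (ra_step haD.2 hab hbE.1) (ra_symm hbE.2))
  rcases hmem a hac with hA | hA <;> rcases hmem b hbc with hB | hB
  · exact inp1 a b hA hB hab habe
  · by_cases h2 : b ∈ p1.support
    · exact inp1 a b hA h2 hab habe
    by_cases h1 : a ∈ p2.support
    · exact inp2 a b h1 hB hab habe
    · exact mixed a b hA h1 hB h2 hab
  · by_cases h2 : a ∈ p1.support
    · exact inp1 a b h2 hB hab habe
    by_cases h1 : b ∈ p2.support
    · exact inp2 a b hA h1 hab habe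
    · exact mixed b a hB h1 hA h2 hab.symm
  · exact inp2 a b hA hB hab habe

end MinSepClique


section CutGraph
variable {V : Type}
open SimpleGraph

def cutGraph (I : SimpleGraph V) (D : Set V) (S' : Finset V) : SimpleGraph V where
  Adj a b := I.Adj a b ∧ ¬((a ∈ D ∧ b ∉ D ∧ b ∉ S') ∨ (b ∈ D ∧ a ∉ D ∧ a ∉ S'))
  symm := by
    constructor; intro a b h
    exact ⟨h.1.symm, fun hc => h.2 (Or.symm hc)⟩
  loopless := ⟨fun a h => I.loopless.irrefl a h.1⟩

lemma cut_walk_hits {I : SimpleGraph V} {D : Set V} {S' : Finset V} :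
    ∀ {c d : V} (w : (cutGraph I D S').Walk c d), c ∈ D → d ∉ D → ∃ s ∈ w.support, s ∈ S' := by
  intro c d w
  induction w with
  | nil => intro h1 h2; exact absurd h1 h2
  | @cons c e d h w ih =>
    intro h1 h2
    by_cases he : e ∈ S'
    · refine ⟨e, ?_, he⟩
      rw [Walk.support_cons]
      exact List.mem_cons_of_mem _ (Walk.start_mem_support w)
    · have heD : e ∈ D := by
        by_contra heD
        exact h.2 (Or.inl ⟨h1, heD, he⟩)
      obtain ⟨s, hs1, hs2⟩ := ih heD h2
      refine ⟨s, ?_, hs2⟩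
      rw [Walk.support_cons]
      exact List.mem_cons_of_mem _ hs1

lemma exists_cross {I : SimpleGraph V} {D : Set V} {S' : Finset V} :
    ∀ {c d : V} (w : I.Walk c d), (∀ z ∈ w.support, z ∉ S') → c ∈ D → d ∉ D →
      ∃ a b : V, a ∈ D ∧ b ∉ D ∧ b ∉ S' ∧ I.Adj a b := by
  intro c d w
  induction w with
  | nil => intro _ h1 h2; exact absurd h1 h2
  | @cons c e d h w ih =>
    intro hav h1 h2
    by_cases heD : e ∈ D
    · refine ih (fun z hz => hav z ?_) heD h2
      rw [Walk.support_cons]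
      exact List.mem_cons_of_mem _ hz
    · refine ⟨c, e, h1, heD, hav e ?_, h⟩
      rw [Walk.support_cons]
      exact List.mem_cons_of_mem _ (Walk.start_mem_support w)

lemma closed_mem_iff {G : SimpleGraph V} {v z : V} {w : G.Walk v v} (hw : w.length ≠ 0) :
    z ∈ w.support ↔ z ∈ w.support.tail := by
  constructor
  · intro h
    rw [Walk.support_eq_cons w] at h
    rcases List.mem_cons.mp h with rfl | h
    · cases w with
      | nil => simp at hw
      | cons h' q => simp [Walk.end_mem_support q]
    · exact h
  · intro h
    rw [Walk.support_eq_cons w]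
    exact List.mem_cons_of_mem _ h

end CutGraph

/-- every minimal separator of a minimal triangulation `I` of `G`
is a minimal separator of `G`. -/
theorem stmt8 {V : Type} (G I : SimpleGraph V) (hI : IsMinTriang G I)
    (S : Finset V) (hS : IsMinSep I S) : IsMinSep G S := by
  classical
  obtain ⟨⟨hGI, hIchord⟩, hImin⟩ := hI
  have hclique := minsep_clique hIchord hS
  obtain ⟨u, v, huv, hnadj, ⟨huS, hvS, hsep⟩, hmin⟩ := hS
  refine ⟨u, v, huv, fun h => hnadj (hGI h),
    ⟨huS, hvS, fun hr => hsep (ra_ofLe hGI hr)⟩, ?_⟩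
  intro S' hS' hUV
  obtain ⟨huS', hvS', hnr⟩ := hUV
  have hre : ReachAvoid I S' u v := by
    by_contra h
    exact hmin S' hS' ⟨huS', hvS', h⟩
  set D : Set V := {w | w ∉ S' ∧ ReachAvoid G S' u w} with hD
  have huD : u ∈ D := ⟨huS', ra_nil huS'⟩
  have hvD : v ∉ D := fun h => hnr h.2
  have hclosed : ∀ a, a ∈ D → ∀ b, G.Adj a b → b ∉ S' → b ∈ D :=
    fun a ha b hab hb => ⟨hb, ra_step ha.2 hab hb⟩
  set I' : SimpleGraph V := cutGraph I D S' with hI'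
  have hI'le : I' ≤ I := by intro a b h; exact h.1
  have hGle : G ≤ I' := by
    intro a b hab
    refine ⟨hGI hab, ?_⟩
    rintro (⟨haD, hbD, hbS⟩ | ⟨hbD, haD, haS⟩)
    · exact hbD (hclosed a haD b hab hbS)
    · exact haD (hclosed b hbD a hab.symm haS)
  obtain ⟨p0, hp0⟩ := hre
  obtain ⟨a0, b0, ha0, hb0, hb0S, hadj0⟩ := exists_cross p0 hp0 huD hvD
  have hneI : I' ≠ I := by
    intro h
    have h' : I'.Adj a0 b0 := by rw [h]; exact hadj0
    exact h'.2 (Or.inl ⟨ha0, hb0, hb0S⟩)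
  have hnc : ¬ IsChordal I' := fun hch => hneI (hImin I' ⟨hGle, hch⟩ hI'le)
  unfold IsChordal at hnc
  push_neg at hnc
  obtain ⟨v0, p, hpc, hplen, hnochord⟩ := hnc
  have hq : (p.mapLe hI'le).IsCycle := SimpleGraph.Walk.IsCycle.mapLe hI'le hpc
  have hid : ⇑(SimpleGraph.Hom.ofLE hI'le) = id := rfl
  have hsupq : (p.mapLe hI'le).support = p.support := by
    rw [SimpleGraph.Walk.support_map, hid, List.map_id]
  have hedq : (p.mapLe hI'le).edges = p.edges := by
    rw [SimpleGraph.Walk.edges_map, hid, Sym2.map_id, List.map_id]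
  have hlnq : (p.mapLe hI'le).length = p.length :=
    SimpleGraph.Walk.length_map (SimpleGraph.Hom.ofLE hI'le) p
  obtain ⟨a, b, ha, hb, hab, habe⟩ := hIchord v0 (p.mapLe hI'le) hq (by omega)
  rw [hsupq] at ha hb
  rw [hedq] at habe
  have hDS' : ∀ z, z ∈ D → z ∉ S' := fun z hz => hz.1
  have hS'clq : ∀ s t : V, s ∈ S' → t ∈ S' → s ≠ t → I.Adj s t :=
    fun s t hs ht hne => hclique s (hS'.subset hs) t (hS'.subset ht) hne
  have final : ∀ a b : V, a ∈ p.support → b ∈ p.support → a ∈ D → b ∉ D → b ∉ S' → False := by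
    intro a b ha hb haD hbD hbS
    set p' := p.rotate a ha with hp'def
    have hp'c : p'.IsCycle := hpc.rotate ha
    have hp'len : p'.length = p.length := by
      have h1 := (p.rotate_edges a ha).perm.length_eq
      rwa [SimpleGraph.Walk.length_edges, SimpleGraph.Walk.length_edges] at h1
    have hplen0 : p.length ≠ 0 := by omega
    have htail := p.support_rotate a ha
    have hmem' : ∀ z : V, z ∈ p'.support ↔ z ∈ p.support := by
      intro z
      rw [closed_mem_iff (by omega : p'.length ≠ 0), closed_mem_iff hplen0]
      exact htail.mem_iff
    have hedmem : ∀ e, e ∈ p'.edges ↔ e ∈ p.edges := fun e => (p.rotate_edges a ha).mem_iff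
    have hbp' : b ∈ p'.support := (hmem' b).mpr hb
    set w1 := p'.takeUntil b hbp' with hw1
    set w2 := p'.dropUntil b hbp' with hw2
    obtain ⟨s1, hs1w, hs1S⟩ := cut_walk_hits w1 haD hbD
    obtain ⟨s2, hs2w, hs2S⟩ := cut_walk_hits w2.reverse haD hbD
    rw [SimpleGraph.Walk.support_reverse, List.mem_reverse] at hs2w
    have hs1a : s1 ≠ a := fun h => (hDS' a haD) (h ▸ hs1S)
    have hs2b : s2 ≠ b := fun h => hbS (h ▸ hs2S)
    have hs1t : s1 ∈ w1.support.tail := by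
      have h' := hs1w
      rw [SimpleGraph.Walk.support_eq_cons w1] at h'
      rcases List.mem_cons.mp h' with h'' | h''
      · exact absurd h'' hs1a
      · exact h''
    have hs2t : s2 ∈ w2.support.tail := by
      have h' := hs2w
      rw [SimpleGraph.Walk.support_eq_cons w2] at h'
      rcases List.mem_cons.mp h' with h'' | h''
      · exact absurd h'' hs2b
      · exact h''
    have hsupp' := SimpleGraph.Walk.support_append w1 w2
    rw [p'.take_spec hbp'] at hsupp'
    have htl : p'.support.tail = w1.support.tail ++ w2.support.tail := by
      rw [hsupp']
      conv_lhs => rw [SimpleGraph.Walk.support_eq_cons w1]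
      rfl
    have hnd : (w1.support.tail ++ w2.support.tail).Nodup := htl ▸ hp'c.support_nodup
    have hdisj12 : ∀ {x}, x ∈ w1.support.tail → x ∈ w2.support.tail → False :=
      fun hx hx2 => (List.nodup_append.mp hnd).2.2 _ hx _ hx2 rfl
    have hs12 : s1 ≠ s2 := fun h => hdisj12 hs1t (h ▸ hs2t)
    have hadj12 : I.Adj s1 s2 := hS'clq s1 s2 hs1S hs2S hs12
    have hadj12' : I'.Adj s1 s2 := by
      refine ⟨hadj12, ?_⟩
      rintro (⟨h', _, _⟩ | ⟨h', _, _⟩)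
      · exact hDS' s1 h' hs1S
      · exact hDS' s2 h' hs2S
    have hedns : s(s1, s2) ∉ p'.edges := by
      intro h
      have hed := SimpleGraph.Walk.edges_append w1 w2
      rw [p'.take_spec hbp'] at hed
      rw [hed] at h
      rcases List.mem_append.mp h with h' | h'
      · have h2 : s2 ∈ w1.support := w1.snd_mem_support_of_mem_edges h'
        rw [SimpleGraph.Walk.support_eq_cons w1] at h2
        rcases List.mem_cons.mp h2 with h'' | h''
        · exact hDS' a haD (h'' ▸ hs2S)
        · exact hdisj12 h'' hs2t
      · have h1 : s1 ∈ w2.support := w2.fst_mem_support_of_mem_edges h'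
        rw [SimpleGraph.Walk.support_eq_cons w2] at h1
        rcases List.mem_cons.mp h1 with h'' | h''
        · exact hbS (h'' ▸ hs1S)
        · exact hdisj12 hs1t h''
    have hs1p : s1 ∈ p.support := (hmem' s1).mp (p'.support_takeUntil_subset hbp' hs1w)
    have hs2p : s2 ∈ p.support := (hmem' s2).mp (p'.support_dropUntil_subset hbp' hs2w)
    have hcd := hnochord s1 s2 hs1p hs2p hadj12'
    exact hedns ((hedmem _).mpr hcd)
  have hcross : (a ∈ D ∧ b ∉ D ∧ b ∉ S') ∨ (b ∈ D ∧ a ∉ D ∧ a ∉ S') := by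
    by_contra h
    exact habe (hnochord a b ha hb ⟨hab, h⟩)
  rcases hcross with ⟨h1, h2, h3⟩ | ⟨h1, h2, h3⟩
  · exact final a b ha hb h1 h2 h3
  · exact final b a hb ha h1 h2 h3
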